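/- One has ∑_{n=0}^∞ P_n(0;p,q)² = √q · ∑_{n=0}^∞ ((p;q)_n/(q;q)_n)·q^n = √q · (pq;q)_∞/(q;q)_∞, where the series converge. -/

import Mathlib

/-- Finite q-shifted factorial `(z;q)_n`. -/
noncomputable def qp (z q : ℝ) (n : ℕ) : ℝ := ∏ k ∈ Finset.range n, (1 - z * q ^ k)

/-- Infinite q-shifted factorial `(z;q)_∞`. -/
noncomputable def qpInf (z q : ℝ) : ℝ := ∏' k : ℕ, (1 - z * q ^ k)

/-- Value at zero of the orthonormal generalized Stieltjes–Wigert polynomial: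
`P_n(0;p,q) = (−1)^n q^{n/2+1/4} √((p;q)_n/(q;q)_n)`. -/
noncomputable def P0 (p q : ℝ) (n : ℕ) : ℝ :=
  (-1) ^ n * q ^ ((n : ℝ) / 2 + 1 / 4) * Real.sqrt (qp p q n / qp q q n)

lemma factor_pos {z q : ℝ} (hz0 : 0 ≤ z) (hz1 : z < 1) (hq0 : 0 < q) (hq1 : q < 1)
    (k : ℕ) : 0 < 1 - z * q ^ k := by
  have hqk : q ^ k ≤ 1 := pow_le_one₀ hq0.le hq1.le
  have : z * q ^ k ≤ z * 1 := by
    exact mul_le_mul_of_nonneg_left hqk hz0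
  nlinarith

lemma qp_pos {z q : ℝ} (hz0 : 0 ≤ z) (hz1 : z < 1) (hq0 : 0 < q) (hq1 : q < 1)
    (n : ℕ) : 0 < qp z q n :=
  Finset.prod_pos fun k _ => factor_pos hz0 hz1 hq0 hq1 k

lemma hasProd_qp {z q : ℝ} (hz0 : 0 ≤ z) (hz1 : z < 1) (hq0 : 0 < q) (hq1 : q < 1) :
    HasProd (fun k : ℕ => 1 - z * q ^ k) (qpInf z q) ∧ 0 < qpInf z q := by
  set g : ℕ → ℝ := fun k => Real.log (1 - z * q ^ k) with hg
  have hfpos : ∀ k : ℕ, (0:ℝ) < 1 - z * q ^ k := factor_pos hz0 hz1 hq0 hq1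
  have hsum : Summable g := by
    have hbound : ∀ k : ℕ, ‖g k‖ ≤ (z / (1 - z)) * q ^ k := by
      intro k
      have hqk0 : 0 < q ^ k := pow_pos hq0 k
      have hx0 : 0 ≤ z * q ^ k := mul_nonneg hz0 hqk0.le
      have hqk1 : q ^ k ≤ 1 := pow_le_one₀ hq0.le hq1.le
      have hxz : z * q ^ k ≤ z := by nlinarith
      have hgle : g k ≤ 0 := Real.log_nonpos (by linarith [hfpos k]) (by linarith [hx0])
      rw [Real.norm_eq_abs, abs_of_nonpos hgle]
      have h1 : -g k = Real.log (1 - z * q ^ k)⁻¹ := by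
        rw [Real.log_inv]
      have h2 : Real.log (1 - z * q ^ k)⁻¹ ≤ (1 - z * q ^ k)⁻¹ - 1 :=
        Real.log_le_sub_one_of_pos (inv_pos.mpr (hfpos k))
      have h3 : (1 - z * q ^ k)⁻¹ - 1 = (z * q ^ k) / (1 - z * q ^ k) := by
        rw [eq_div_iff (hfpos k).ne', sub_mul, inv_mul_cancel₀ (hfpos k).ne']
        ring
      have h4 : (z * q ^ k) / (1 - z * q ^ k) ≤ (z * q ^ k) / (1 - z) := by
        apply div_le_div_of_nonneg_left hx0 (by linarith)
        linarith
      rw [h1]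
      calc Real.log (1 - z * q ^ k)⁻¹ ≤ (z * q ^ k) / (1 - z * q ^ k) := by rw [← h3]; exact h2
        _ ≤ (z * q ^ k) / (1 - z) := h4
        _ = (z / (1 - z)) * q ^ k := by ring
    exact Summable.of_norm_bounded
      ((summable_geometric_of_lt_one hq0.le hq1).mul_left _) hbound
  have hhp : HasProd (fun k : ℕ => 1 - z * q ^ k) (Real.exp (∑' k, g k)) := by
    have := hsum.hasSum.rexp
    refine this.congr_fun fun k => ?_
    simp [Function.comp, hg, Real.exp_log (hfpos k)]
  have htp : qpInf z q = Real.exp (∑' k, g k) := hhp.tprod_eq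
  refine ⟨htp ▸ hhp, htp ▸ Real.exp_pos _⟩

theorem stmt_2 (p q : ℝ) (hp0 : 0 ≤ p) (hp1 : p < 1) (hq0 : 0 < q) (hq1 : q < 1) :
    Summable (fun n : ℕ => (P0 p q n) ^ 2) ∧
    Summable (fun n : ℕ => qp p q n / qp q q n * q ^ n) ∧
    (∑' n : ℕ, (P0 p q n) ^ 2) = Real.sqrt q * ∑' n : ℕ, qp p q n / qp q q n * q ^ n ∧
    Real.sqrt q * (∑' n : ℕ, qp p q n / qp q q n * q ^ n)
      = Real.sqrt q * (qpInf (p * q) q / qpInf q q) := by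
  have hpq0 : 0 ≤ p * q := mul_nonneg hp0 hq0.le
  have hpq1 : p * q < 1 := by nlinarith
  -- limits of the partial products
  have hA := hasProd_qp hpq0 hpq1 hq0 hq1
  have hB := hasProd_qp hq0.le hq1 hq0 hq1
  have hAt : Filter.Tendsto (fun n : ℕ => qp (p * q) q n) Filter.atTop (nhds (qpInf (p*q) q)) :=
    hA.1.tendsto_prod_nat
  have hBt : Filter.Tendsto (fun n : ℕ => qp q q n) Filter.atTop (nhds (qpInf q q)) :=
    hB.1.tendsto_prod_nat
  set L : ℝ := qpInf (p*q) q / qpInf q q with hL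
  have hTt : Filter.Tendsto (fun n : ℕ => qp (p*q) q n / qp q q n) Filter.atTop (nhds L) :=
    hAt.div hBt hB.2.ne'
  -- telescoping identity
  have htel : ∀ N : ℕ, ∑ n ∈ Finset.range (N+1), qp p q n / qp q q n * q ^ n
      = qp (p*q) q N / qp q q N := by
    intro N
    induction N with
    | zero => simp [qp]
    | succ N ih =>
      rw [Finset.sum_range_succ, ih]
      have hqB : qp q q N ≠ 0 := (qp_pos hq0.le hq1 hq0 hq1 N).ne'
      have hqB' : qp q q (N+1) ≠ 0 := (qp_pos hq0.le hq1 hq0 hq1 (N+1)).ne'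
      have hQ : qp q q (N+1) = qp q q N * (1 - q * q ^ N) := Finset.prod_range_succ _ _
      have hP : qp p q (N+1) = qp p q N * (1 - p * q ^ N) := Finset.prod_range_succ _ _
      have hAq : qp (p*q) q (N+1) = qp (p*q) q N * (1 - p * q * q ^ N) :=
        Finset.prod_range_succ _ _
      -- (p;q)_{n+1} = (1-p) * (pq;q)_n
      have hPfact : ∀ n : ℕ, qp p q (n+1) = (1 - p) * qp (p*q) q n := by
        intro n
        induction n with
        | zero => simp [qp]
        | succ n ih2 =>
          have e1 : qp p q (n+2) = qp p q (n+1) * (1 - p * q ^ (n+1)) :=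
            Finset.prod_range_succ _ _
          have e2 : qp (p*q) q (n+1) = qp (p*q) q n * (1 - p*q * q^n) :=
            Finset.prod_range_succ _ _
          rw [e1, ih2, e2]; ring
      have hfq : (1 - q * q ^ N) ≠ 0 := (factor_pos hq0.le hq1 hq0 hq1 N).ne'
      rw [hPfact N, hQ, hAq]
      field_simp
      ring
  -- the sum has sum L
  have hnonneg : ∀ n : ℕ, 0 ≤ qp p q n / qp q q n * q ^ n := fun n =>
    mul_nonneg (div_nonneg (qp_pos hp0 hp1 hq0 hq1 n).le (qp_pos hq0.le hq1 hq0 hq1 n).le)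
      (pow_nonneg hq0.le n)
  have hhs : HasSum (fun n : ℕ => qp p q n / qp q q n * q ^ n) L := by
    rw [hasSum_iff_tendsto_nat_of_nonneg hnonneg]
    rw [← Filter.tendsto_add_atTop_iff_nat 1]
    exact Filter.Tendsto.congr (fun N => (htel N).symm) hTt
  -- relate P0 squared
  have hP0sq : ∀ n : ℕ, (P0 p q n) ^ 2 = Real.sqrt q * (qp p q n / qp q q n * q ^ n) := by
    intro n
    have hc0 : 0 ≤ qp p q n / qp q q n :=
      div_nonneg (qp_pos hp0 hp1 hq0 hq1 n).le (qp_pos hq0.le hq1 hq0 hq1 n).le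
    have h1 : (q ^ ((n : ℝ) / 2 + 1 / 4)) ^ 2 = Real.sqrt q * q ^ n := by
      rw [← Real.rpow_natCast (q ^ ((n : ℝ) / 2 + 1 / 4)) 2, ← Real.rpow_mul hq0.le]
      have : ((n : ℝ) / 2 + 1 / 4) * (2:ℕ) = (1/2 : ℝ) + (n : ℝ) := by push_cast; ring
      rw [this, Real.rpow_add hq0, Real.rpow_natCast, ← Real.sqrt_eq_rpow]
    have h2 : Real.sqrt (qp p q n / qp q q n) ^ 2 = qp p q n / qp q q n :=
      Real.sq_sqrt hc0
    simp only [P0, mul_pow]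
    rw [h1, h2]
    rcases Nat.even_or_odd n with he | ho
    · rw [he.neg_one_pow]; ring
    · rw [Odd.neg_one_pow ho]; ring
  refine ⟨?_, hhs.summable, ?_, ?_⟩
  · exact (hhs.summable.mul_left (Real.sqrt q)).congr fun n => (hP0sq n).symm
  · rw [tsum_congr hP0sq, tsum_mul_left]
  · rw [hhs.tsum_eq]
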